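/- arXiv:1502.06198 — 10 statements merged into one kernel-verified Lean document; each statement's English description precedes it below -/
import Mathlib

section
/- The affine Hermitian point set K = {(α, β) ∈ F × F : β^q + β = α^{q+1}} has exactly q³ elements. -/
open Polynomial

/-- Any set of solutions of `x^n + a*x = 0` (with `2 ≤ n`) has at most `n` elements. -/
lemma herm_aux_card_le {F : Type*} [Field F] [Fintype F] {n : ℕ} (hn : 2 ≤ n) (a : F)
    (s : Set F) (h : ∀ x ∈ s, x ^ n + a * x = 0) : s.ncard ≤ n := by
  classical
  set f : F[X] := X ^ n + C a * X with hf
  have hmon : f.Monic := by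
    apply monic_X_pow_add
    calc (C a * X).degree ≤ (C a).degree + X.degree := degree_mul_le _ _
      _ ≤ 0 + 1 := add_le_add degree_C_le degree_X_le
      _ < n := by
        norm_num
        exact_mod_cast lt_of_lt_of_le one_lt_two hn
  have hdeg : f.natDegree ≤ n := by
    apply natDegree_add_le_of_degree_le (natDegree_X_pow_le n)
    calc (C a * X).natDegree ≤ (C a).natDegree + X.natDegree := natDegree_mul_le
      _ ≤ 0 + 1 := add_le_add (le_of_eq (natDegree_C a)) natDegree_X_le
      _ ≤ n := le_trans (by norm_num) hn
  have hsub : s ⊆ (f.roots.toFinset : Set F) := by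
    intro x hx
    simp only [Finset.coe_sort_coe, Multiset.mem_toFinset, Finset.mem_coe]
    rw [mem_roots hmon.ne_zero]
    simp only [IsRoot, hf, eval_add, eval_pow, eval_X, eval_mul, eval_C]
    exact h x hx
  calc s.ncard ≤ (f.roots.toFinset : Set F).ncard := Set.ncard_le_ncard hsub (Set.toFinite _)
    _ = f.roots.toFinset.card := Set.ncard_coe_finset _
    _ ≤ Multiset.card f.roots := Multiset.toFinset_card_le _
    _ ≤ f.natDegree := f.card_roots'
    _ ≤ n := hdeg

/-- The affine Hermitian point set `K = {(α, β) ∈ F × F : β^q + β = α^(q+1)}` has exactly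
`q³` elements, where `F` is the finite field with `q²` elements and `q` is a prime power. -/
theorem stmt_1 (q : ℕ) (hq : IsPrimePow q) (F : Type*) [Field F] [Fintype F]
    (hF : Fintype.card F = q ^ 2) :
    {p : F × F | p.2 ^ q + p.2 = p.1 ^ (q + 1)}.ncard = q ^ 3 := by
  classical
  obtain ⟨p, k, hp0, hk, hpk⟩ := hq
  have hp : p.Prime := hp0.nat_prime
  haveI : Fact p.Prime := ⟨hp⟩
  have hq2 : 2 ≤ q := by
    rw [← hpk]
    calc 2 ≤ p := hp.two_le
      _ = p ^ 1 := (pow_one p).symm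
      _ ≤ p ^ k := Nat.pow_le_pow_right hp.pos hk
  have hq0 : 0 < q := lt_of_lt_of_le two_pos hq2
  -- characteristic of F is p
  haveI hcharF : CharP F p := by
    have hr : (ringChar F).Prime := CharP.char_is_prime F (ringChar F)
    obtain ⟨n, -, hcard⟩ := FiniteField.card F (ringChar F)
    have hdvd : ringChar F ∣ p := by
      have h1 : ringChar F ∣ p ^ (k * 2) := by
        rw [pow_mul, hpk, ← hF, hcard]
        exact dvd_pow_self _ (by positivity)
      exact hr.dvd_of_dvd_pow h1
    have : ringChar F = p := (Nat.prime_dvd_prime_iff_eq hr hp).mp hdvd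
    rw [← this]; exact ringChar.charP F
  -- the additive map T x = x^q + x
  have hadd : ∀ x y : F, (x + y) ^ q = x ^ q + y ^ q := by
    intro x y; rw [← hpk]; exact add_pow_char_pow x y p k
  let T : F →+ F :=
    { toFun := fun x => x ^ q + x
      map_zero' := by simp [zero_pow hq0.ne']
      map_add' := fun x y => by show (x + y) ^ q + (x + y) = (x ^ q + x) + (y ^ q + y); rw [hadd]; ring }
  have hT : ∀ x : F, T x = x ^ q + x := fun _ => rfl
  have hFq : ∀ x : F, x ^ q ^ 2 = x := by
    intro x; rw [← hF]; exact FiniteField.pow_card x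
  -- kernel and range cardinality bounds
  have hker_le : Nat.card T.ker ≤ q := by
    have := herm_aux_card_le hq2 (1 : F) (T.ker : Set F) ?_
    · rwa [← Nat.card_coe_set_eq] at this
    · intro x hx
      have : T x = 0 := hx
      rw [hT] at this
      rw [one_mul]; exact this
  have hS_le : {x : F | x ^ q = x}.ncard ≤ q := by
    apply herm_aux_card_le hq2 (-1 : F)
    intro x hx
    rw [neg_one_mul, Set.mem_setOf_eq.mp hx]
    ring
  have hrange_sub : (T.range : Set F) ⊆ {x : F | x ^ q = x} := by
    rintro _ ⟨x, rfl⟩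
    show (T x) ^ q = T x
    rw [hT, hadd, ← pow_mul, ← sq, hFq, add_comm]
  -- first isomorphism theorem counting
  have hcards : Nat.card (F ⧸ T.ker) * Nat.card T.ker = q ^ 2 := by
    rw [← AddSubgroup.card_eq_card_quotient_mul_card_addSubgroup, Nat.card_eq_fintype_card, hF]
  have hquot : Nat.card (F ⧸ T.ker) = Nat.card T.range :=
    Nat.card_congr (QuotientAddGroup.quotientKerEquivRange T).toEquiv
  have hrange_le : Nat.card T.range ≤ q := by
    have h1 : (T.range : Set F).ncard ≤ q :=
      le_trans (Set.ncard_le_ncard hrange_sub (Set.toFinite _)) hS_le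
    rwa [← Nat.card_coe_set_eq] at h1
  have hker_eq : Nat.card T.ker = q := by
    have h1 : q * q ≤ Nat.card T.range * Nat.card T.ker := by
      rw [← hquot, hcards, sq]
    by_contra hne
    have hlt : Nat.card T.ker < q := lt_of_le_of_ne hker_le hne
    have : Nat.card T.range * Nat.card T.ker < q * q :=
      Nat.mul_lt_mul_of_le_of_lt hrange_le hlt hq0
    omega
  have hrange_eq : Nat.card T.range = q := by
    have h1 : Nat.card T.range * q = q * q := by
      rw [← hker_eq, ← hquot, hcards, sq, hker_eq]
    exact Nat.eq_of_mul_eq_mul_right hq0 h1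
  -- range = {x | x^q = x}
  have hrange_set : (T.range : Set F) = {x : F | x ^ q = x} := by
    apply Set.eq_of_subset_of_ncard_le hrange_sub
    · have h2 : (T.range : Set F).ncard = q := by
        rw [← Nat.card_coe_set_eq]; exact hrange_eq
      rw [h2]; exact hS_le
  -- each α^(q+1) is in the range of T
  have hmem : ∀ α : F, ∃ β : F, T β = α ^ (q + 1) := by
    intro α
    have : α ^ (q + 1) ∈ (T.range : Set F) := by
      rw [hrange_set]
      show (α ^ (q + 1)) ^ q = α ^ (q + 1)
      rw [← pow_mul]
      have : (q + 1) * q = q ^ 2 + q := by ring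
      rw [this, pow_add, hFq, pow_add, pow_one, mul_comm]
    exact this
  -- fibers have cardinality q
  have hfiber : ∀ α : F, Nat.card {β : F // β ^ q + β = α ^ (q + 1)} = q := by
    intro α
    obtain ⟨β₀, hβ₀⟩ := hmem α
    have e : {β : F // β ^ q + β = α ^ (q + 1)} ≃ T.ker :=
      { toFun := fun b => ⟨b.1 - β₀, by
          have hb : T b.1 = α ^ (q + 1) := b.2
          simp only [AddMonoidHom.mem_ker, map_sub, hb, hβ₀, sub_self]⟩
        invFun := fun x => ⟨x.1 + β₀, by
          have hx : T x.1 = 0 := x.2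
          show T (x.1 + β₀) = α ^ (q + 1)
          rw [map_add, hx, hβ₀, zero_add]⟩
        left_inv := fun b => by ext; simp
        right_inv := fun x => by ext; simp }
    rw [Nat.card_congr e, hker_eq]
  -- put it together
  have e2 : {x : F × F // x.2 ^ q + x.2 = x.1 ^ (q + 1)} ≃
      Σ α : F, {β : F // β ^ q + β = α ^ (q + 1)} :=
    { toFun := fun x => ⟨x.1.1, x.1.2, x.2⟩
      invFun := fun y => ⟨(y.1, y.2.1), y.2.2⟩
      left_inv := fun x => rfl
      right_inv := fun y => rfl }
  have hncard : {p : F × F | p.2 ^ q + p.2 = p.1 ^ (q + 1)}.ncard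
      = Nat.card {x : F × F // x.2 ^ q + x.2 = x.1 ^ (q + 1)} := by
    rw [← Nat.card_coe_set_eq]; rfl
  rw [hncard, Nat.card_congr e2, Nat.card_eq_fintype_card, Fintype.card_sigma]
  have hfib' : ∀ α : F, Fintype.card {β : F // β ^ q + β = α ^ (q + 1)} = q := by
    intro α; rw [← Nat.card_eq_fintype_card]; exact hfiber α
  simp only [hfib']
  rw [Finset.sum_const, Finset.card_univ, hF, smul_eq_mul, ← pow_succ]
end

section
/- Let (α, β) ∈ K, let γ ∈ F satisfy γ^q + γ ≠ 0, let δ ∈ F satisfy δ^{q+1} = γ^q + γ (so necessarily δ ≠ 0), and let ζ ∈ F be a primitive (q+1)-st root of unity. Then {(x, y) ∈ K : y − β − α^q·(x − α) = γ} = {(α + δζ^i, β + γ + α^q·δζ^i) : 0 ≤ i ≤ q}, and this set has exactly q + 1 elements. -/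
/-- Let `(α, β) ∈ K`, let `γ ∈ F` satisfy `γ^q + γ ≠ 0`, let `δ ∈ F` satisfy
`δ^(q+1) = γ^q + γ`, and let `ζ ∈ F` be a primitive `(q+1)`-st root of unity. Then the set of
points of `K` on the line `τ_{α,β} − γ` is `{(α + δζ^i, β + γ + α^q δζ^i) : 0 ≤ i ≤ q}`,
and this set has exactly `q + 1` elements. -/
theorem stmt_4 (q : ℕ) (hq : IsPrimePow q) (F : Type*) [Field F] [Fintype F]
    (hF : Fintype.card F = q ^ 2) (α β γ δ ζ : F)
    (hK : β ^ q + β = α ^ (q + 1)) (hγ : γ ^ q + γ ≠ 0)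
    (hδ : δ ^ (q + 1) = γ ^ q + γ) (hζ : IsPrimitiveRoot ζ (q + 1)) :
    {p : F × F | p.2 ^ q + p.2 = p.1 ^ (q + 1) ∧ p.2 - β - α ^ q * (p.1 - α) = γ}
        = (fun i : ℕ => (α + δ * ζ ^ i, β + γ + α ^ q * (δ * ζ ^ i))) '' Set.Iic q ∧
      {p : F × F | p.2 ^ q + p.2 = p.1 ^ (q + 1) ∧ p.2 - β - α ^ q * (p.1 - α) = γ}.ncard
        = q + 1 := by
  classical
  -- characteristic setup
  obtain ⟨p, n, hp, hn, rfl⟩ := hq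
  have hp' : Fact p.Prime := ⟨hp.nat_prime⟩
  have hchar : CharP F p := by
    obtain ⟨r, hr⟩ := CharP.exists F
    obtain ⟨m, hrp, hcard⟩ := @FiniteField.card F _ _ r hr
    have hd : p ∣ r ^ (m : ℕ) := by
      rw [← hcard, hF]
      exact dvd_pow (dvd_pow_self p hn.ne') (by positivity)
    have := Nat.Prime.dvd_of_dvd_pow hp.nat_prime hd
    rwa [(Nat.prime_dvd_prime_iff_eq hp.nat_prime hrp).mp this]
  set q : ℕ := p ^ n with hqdef
  have hfrob : ∀ x y : F, (x + y) ^ q = x ^ q + y ^ q := fun x y =>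
    add_pow_char_pow x y p n
  -- Frobenius squared is identity
  have hsq : ∀ x : F, (x ^ q) ^ q = x := by
    intro x
    rw [← pow_mul, ← sq, ← hF, FiniteField.pow_card]
  have hδ0 : δ ≠ 0 := by
    intro h
    apply hγ
    rw [← hδ, h, zero_pow (Nat.succ_ne_zero q)]
  have hK' : β ^ q + β = α ^ q * α := by rw [hK, pow_succ]
  -- key algebraic equivalence
  have key : ∀ t : F, ((β + γ + α ^ q * t) ^ q + (β + γ + α ^ q * t) = (α + t) ^ (q + 1))
      ↔ t ^ q * t = γ ^ q + γ := by
    intro t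
    have e1 : (β + γ + α ^ q * t) ^ q = β ^ q + γ ^ q + α * t ^ q := by
      rw [hfrob, hfrob, mul_pow, hsq]
    have e2 : (α + t) ^ (q + 1) = (α ^ q + t ^ q) * (α + t) := by
      rw [pow_succ, hfrob]
    rw [e1, e2]
    constructor
    · intro h; linear_combination hK' - h
    · intro h; linear_combination hK' - h
  -- set equality
  have hset : {p : F × F | p.2 ^ q + p.2 = p.1 ^ (q + 1) ∧ p.2 - β - α ^ q * (p.1 - α) = γ}
      = (fun i : ℕ => (α + δ * ζ ^ i, β + γ + α ^ q * (δ * ζ ^ i))) '' Set.Iic q := by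
    ext pp
    simp only [Set.mem_setOf_eq, Set.mem_image, Set.mem_Iic]
    constructor
    · obtain ⟨x, y⟩ := pp
      rintro ⟨hc, hl⟩
      have hy : y = β + γ + α ^ q * (x - α) := by linear_combination hl
      set t : F := x - α with ht
      have hx : x = α + t := by ring
      have hcurve : (β + γ + α ^ q * t) ^ q + (β + γ + α ^ q * t) = (α + t) ^ (q + 1) := by
        rw [← hy, ← hx]; exact hc
      have htq : t ^ q * t = γ ^ q + γ := (key t).mp hcurve
      have ht0 : t ≠ 0 := by
        intro h; apply hγ; rw [← htq, h]; ring
      have hroot : (t / δ) ^ (q + 1) = 1 := by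
        rw [div_pow, hδ, ← htq, pow_succ, div_self (by
          intro h; apply hγ; rw [← htq, h])]
      have : NeZero (q + 1) := ⟨Nat.succ_ne_zero q⟩
      obtain ⟨i, hi, hzi⟩ := hζ.eq_pow_of_pow_eq_one hroot
      refine ⟨i, Nat.lt_succ_iff.mp hi, ?_⟩
      have htδ : t = δ * ζ ^ i := by
        rw [hzi]; field_simp
      simp only [Prod.ext_iff]
      exact ⟨by rw [hx, htδ], by rw [hy, htδ]⟩
    · rintro ⟨i, hi, rfl⟩
      simp only
      have htq : (δ * ζ ^ i) ^ q * (δ * ζ ^ i) = γ ^ q + γ := by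
        have : (δ * ζ ^ i) ^ (q + 1) = γ ^ q + γ := by
          rw [mul_pow, ← pow_mul, mul_comm i (q+1), pow_mul, hζ.pow_eq_one, one_pow, mul_one, hδ]
        rw [← this, pow_succ]
      exact ⟨(key (δ * ζ ^ i)).mpr htq, by ring⟩
  refine ⟨hset, ?_⟩
  rw [hset]
  have hinj : Set.InjOn (fun i : ℕ => (α + δ * ζ ^ i, β + γ + α ^ q * (δ * ζ ^ i))) (Set.Iic q) := by
    intro i hi j hj h
    simp only [Prod.mk.injEq, add_right_inj] at h
    have : ζ ^ i = ζ ^ j := by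
      have := h.1
      exact mul_left_cancel₀ hδ0 this
    exact hζ.pow_inj (Nat.lt_succ_of_le hi) (Nat.lt_succ_of_le hj) this
  rw [Set.ncard_image_of_injOn hinj, Set.ncard_eq_toFinset_card', Set.toFinset_Iic,
    Nat.card_Iic]
end

section
/- Let b, c ∈ F, let δ ∈ F satisfy δ^{q+1} = b^{q+1} − (c^q + c), and let ζ ∈ F be a primitive (q+1)-st root of unity. Then the set of points of K on the line y + bx + c, namely {(x, y) ∈ K : y + bx + c = 0}, equals {(−b^q + δζ^i, b^{q+1} − c − b·δζ^i) : 0 ≤ i ≤ q}. -/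
/-- Let `b, c ∈ F`, let `δ ∈ F` satisfy `δ^(q+1) = b^(q+1) − (c^q + c)`, and let `ζ ∈ F` be a
primitive `(q+1)`-st root of unity. Then the set of points of `K` on the line `y + bx + c`
equals `{(−b^q + δζ^i, b^(q+1) − c − b δζ^i) : 0 ≤ i ≤ q}`. -/
theorem stmt_5 (q : ℕ) (hq : IsPrimePow q) (F : Type*) [Field F] [Fintype F]
    (hF : Fintype.card F = q ^ 2) (b c δ ζ : F)
    (hδ : δ ^ (q + 1) = b ^ (q + 1) - (c ^ q + c)) (hζ : IsPrimitiveRoot ζ (q + 1)) :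
    {p : F × F | p.2 ^ q + p.2 = p.1 ^ (q + 1) ∧ p.2 + b * p.1 + c = 0}
      = (fun i : ℕ => (-b ^ q + δ * ζ ^ i, b ^ (q + 1) - c - b * (δ * ζ ^ i))) '' Set.Iic q := by
  obtain ⟨p, k, hp, hk, hpk⟩ := hq
  have hp' : p.Prime := hp.nat_prime
  obtain ⟨p', hc⟩ := CharP.exists F
  haveI := hc
  have hp'' : p'.Prime := CharP.char_is_prime F p'
  obtain ⟨n, _, hn⟩ := FiniteField.card F p'
  have hpp : p = p' := by
    have hdvd : p ∣ p' ^ (n : ℕ) := by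
      rw [← hn, hF, ← hpk, ← pow_mul]
      exact dvd_pow_self p (by positivity)
    exact (Nat.prime_dvd_prime_iff_eq hp' hp'').mp (hp'.dvd_of_dvd_pow hdvd)
  subst hpp
  haveI := Fact.mk hp'
  have hcard : ∀ a : F, a ^ q ^ 2 = a := fun a => by rw [← hF]; exact FiniteField.pow_card a
  have hqq : ∀ a : F, (a ^ q) ^ q = a := fun a => by
    rw [← pow_mul, ← sq]; exact hcard a
  have hadd : ∀ a b : F, (a + b) ^ q = a ^ q + b ^ q := fun a b => by
    rw [← hpk]; exact add_pow_char_pow ..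
  have hsub : ∀ a b : F, (a - b) ^ q = a ^ q - b ^ q := fun a b => by
    rw [← hpk]; exact sub_pow_char_pow ..
  have hq0 : q ≠ 0 := by rw [← hpk]; exact (pow_pos hp'.pos k).ne'
  have hneg : ∀ a : F, (-a) ^ q = -a ^ q := fun a => by
    have := hsub 0 a; simpa [zero_pow hq0] using this
  have hnorm : ∀ a : F, (a ^ (q + 1)) ^ q = a ^ (q + 1) := fun a => by
    rw [← pow_mul]
    have : (q + 1) * q = q ^ 2 + q := by ring
    rw [this, pow_add, hcard a, pow_succ]
    ring
  ext ⟨x, y⟩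
  simp only [Set.mem_setOf_eq, Set.mem_image, Set.mem_Iic, Prod.mk.injEq]
  constructor
  · rintro ⟨h1, h2⟩
    have hy : y = -(b * x) - c := by linear_combination h2
    have hyq : y ^ q = -(b ^ q * x ^ q) - c ^ q := by
      rw [hy, hsub, hneg, mul_pow]
    have hu : (x + b ^ q) ^ (q + 1) = δ ^ (q + 1) := by
      rw [pow_succ, hadd, hqq, hδ]
      linear_combination hyq + hy - h1
    by_cases hδ0 : δ = 0
    · have hx0 : x + b ^ q = 0 := by
        have := hu
        rw [hδ0, zero_pow (Nat.succ_ne_zero q)] at this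
        exact pow_eq_zero_iff (Nat.succ_ne_zero q) |>.mp this
      refine ⟨0, Nat.zero_le _, ?_, ?_⟩
      · rw [hδ0]; linear_combination -hx0
      · rw [hδ0]; linear_combination b * hx0 - hy
    · have h1' : ((x + b ^ q) / δ) ^ (q + 1) = 1 := by
        rw [div_pow, hu, div_self (pow_ne_zero _ hδ0)]
      obtain ⟨i, hi, hζi⟩ := hζ.eq_pow_of_pow_eq_one h1'
      rw [eq_div_iff hδ0] at hζi
      refine ⟨i, Nat.lt_succ_iff.mp hi, ?_, ?_⟩
      · linear_combination hζi
      · linear_combination -b * hζi - hy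
  · rintro ⟨i, hi, hx, hy⟩
    subst hx; subst hy
    set u := δ * ζ ^ i with hudef
    have hu1 : u ^ (q + 1) = δ ^ (q + 1) := by
      rw [hudef, mul_pow, ← pow_mul, mul_comm i (q + 1), pow_mul, hζ.pow_eq_one, one_pow, mul_one]
    constructor
    · have E1 : (b ^ (q + 1) - c - b * u) ^ q = b ^ (q + 1) - c ^ q - b ^ q * u ^ q := by
        rw [hsub, hsub, mul_pow, hnorm]
      have E2 : (-b ^ q + u) ^ (q + 1) = (u ^ q - b) * (u - b ^ q) := by
        rw [pow_succ, hadd, hneg, hqq]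
        ring
      show _ + _ = _
      rw [E2]
      linear_combination E1 - hu1 - hδ
    · show _ + _ + _ = (0:F)
      ring
end

section
/- Let b, c ∈ F. The set {(x, y) ∈ K : y + bx + c = 0} has exactly one element if and only if c^q + c = b^{q+1} (equivalently, if and only if (−b, c) ∈ K); and if c^q + c ≠ b^{q+1}, then this set has exactly q + 1 elements. -/
open Polynomial

/-- Counting solutions of `z ^ (q+1) = d` in a field of `q²` elements, when
`d ≠ 0` is fixed by the `q`-power Frobenius. -/
private lemma root_count {q : ℕ} (hq2 : 2 ≤ q) {F : Type*} [Field F] [Fintype F]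
    (hF : Fintype.card F = q ^ 2) {d : F} (hd0 : d ≠ 0) (hdq : d ^ q = d) :
    {z : F | z ^ (q + 1) = d}.ncard = q + 1 := by
  classical
  have hq1 : 1 ≤ q := le_trans one_le_two hq2
  have hfac : q ^ 2 - 1 = (q + 1) * (q - 1) := by
    obtain ⟨m, rfl⟩ : ∃ m, q = m + 1 := ⟨q - 1, by omega⟩
    have h1 : (m + 1) ^ 2 = m * m + 2 * m + 1 := by ring
    have h2 : (m + 1 + 1) * (m + 1 - 1) = m * m + 2 * m := by
      simp only [Nat.add_sub_cancel]; ring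
    omega
  obtain ⟨g, hg⟩ := IsCyclic.exists_generator (α := Fˣ)
  have hog : orderOf g = q ^ 2 - 1 := by
    rw [orderOf_eq_card_of_forall_mem_zpowers hg, Nat.card_units, Nat.card_eq_fintype_card, hF]
  -- a primitive (q+1)-st root of unity
  have horder : orderOf (g ^ (q - 1)) = q + 1 := by
    rw [orderOf_pow, hog, hfac, Nat.gcd_eq_right ⟨q + 1, mul_comm _ _⟩,
      Nat.mul_div_cancel _ (by omega : 0 < q - 1)]
  have hζ : IsPrimitiveRoot ((g ^ (q - 1) : Fˣ) : F) (q + 1) := by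
    have h := IsPrimitiveRoot.orderOf ((g ^ (q - 1) : Fˣ) : F)
    rwa [orderOf_units, horder] at h
  -- existence of one (q+1)-st root of d
  obtain ⟨u, rfl⟩ := hd0.isUnit
  have hu : u ^ (q - 1) = 1 := by
    have h1 : (u : F) * (u : F) ^ (q - 1) = (u : F) * 1 := by
      rw [mul_one, ← pow_succ']
      have : q - 1 + 1 = q := by omega
      rw [this, hdq]
    have h2 : (u : F) ^ (q - 1) = 1 := mul_left_cancel₀ (Units.ne_zero u) h1
    exact Units.ext (by push_cast; exact h2)
  obtain ⟨k, hk⟩ := hg u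
  have hk' : g ^ k = u := hk
  have h1 : g ^ (k * ((q : ℤ) - 1)) = 1 := by
    have : ((q : ℤ) - 1) = ((q - 1 : ℕ) : ℤ) := by push_cast [Nat.cast_sub hq1]; ring
    rw [this, zpow_mul, hk', zpow_natCast, hu]
  have h2 : ((q ^ 2 - 1 : ℕ) : ℤ) ∣ k * ((q : ℤ) - 1) := by
    rw [← hog]; exact orderOf_dvd_iff_zpow_eq_one.mpr h1
  have h3 : ((q : ℤ) + 1) ∣ k := by
    have hcast : ((q ^ 2 - 1 : ℕ) : ℤ) = ((q : ℤ) + 1) * ((q : ℤ) - 1) := by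
      rw [hfac]; push_cast [Nat.cast_sub hq1]; ring
    rw [hcast] at h2
    have hne : ((q : ℤ) - 1) ≠ 0 := by
      have : (1 : ℤ) < (q : ℤ) := by exact_mod_cast hq2
      omega
    exact (mul_dvd_mul_iff_right hne).mp h2
  obtain ⟨j, hj⟩ := h3
  have hex : ∃ α : F, α ^ (q + 1) = (u : F) := by
    refine ⟨((g ^ j : Fˣ) : F), ?_⟩
    have : (g ^ j) ^ (q + 1 : ℕ) = u := by
      rw [← zpow_natCast (g ^ j), ← zpow_mul, ← hk', hj]
      congr 1
      push_cast
      ring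
    calc ((g ^ j : Fˣ) : F) ^ (q + 1) = (((g ^ j) ^ (q + 1) : Fˣ) : F) := by push_cast; ring
      _ = (u : F) := by rw [this]
  -- the count
  have hset : {z : F | z ^ (q + 1) = (u : F)} = ↑(nthRoots (q + 1) (u : F)).toFinset := by
    ext z
    simp [Polynomial.mem_nthRoots (by omega : 0 < q + 1)]
  rw [hset, Set.ncard_coe_finset,
    Multiset.toFinset_card_eq_card_iff_nodup.mpr (hζ.nthRoots_nodup (Units.ne_zero u)),
    hζ.card_nthRoots, if_pos hex]

/-- Let `b, c ∈ F`. The set of points of `K` on the line `y + bx + c` has exactly one element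
if and only if `c^q + c = b^(q+1)`; and if `c^q + c ≠ b^(q+1)`, then this set has exactly
`q + 1` elements. -/
theorem stmt_6 (q : ℕ) (hq : IsPrimePow q) (F : Type*) [Field F] [Fintype F]
    (hF : Fintype.card F = q ^ 2) (b c : F) :
    ({p : F × F | p.2 ^ q + p.2 = p.1 ^ (q + 1) ∧ p.2 + b * p.1 + c = 0}.ncard = 1
        ↔ c ^ q + c = b ^ (q + 1)) ∧
      (c ^ q + c ≠ b ^ (q + 1) →
        {p : F × F | p.2 ^ q + p.2 = p.1 ^ (q + 1) ∧ p.2 + b * p.1 + c = 0}.ncard = q + 1) := by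
  classical
  have hq2 : 2 ≤ q := hq.two_le
  obtain ⟨p, n, hpp, hn, hqeq⟩ := hq
  have hp : p.Prime := hpp.nat_prime
  haveI : Fact p.Prime := ⟨hp⟩
  -- the characteristic of F is p
  obtain ⟨m, hrc, hcard⟩ := FiniteField.card F (ringChar F)
  have hpeq : p = ringChar F := by
    have hdvd : p ∣ (ringChar F) ^ (m : ℕ) := by
      rw [← hcard, hF, ← hqeq, ← pow_mul]
      exact dvd_pow_self p (by positivity)
    exact (Nat.prime_dvd_prime_iff_eq hp hrc).mp (hp.dvd_of_dvd_pow hdvd)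
  haveI : CharP F p := by rw [hpeq]; exact ringChar.charP F
  -- Frobenius facts
  have frob_add : ∀ x y : F, (x + y) ^ q = x ^ q + y ^ q := by
    intro x y; rw [← hqeq]; exact add_pow_char_pow x y p n
  have frob_sub : ∀ x y : F, (x - y) ^ q = x ^ q - y ^ q := by
    intro x y; rw [← hqeq]; exact sub_pow_char_pow x y n (p := p)
  have frob2 : ∀ x : F, (x ^ q) ^ q = x := by
    intro x
    rw [← pow_mul, ← sq, ← hF]
    exact FiniteField.pow_card x
  have frob_neg : ∀ x : F, (-x) ^ q = -(x ^ q) := by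
    intro x
    have h := frob_sub 0 x
    simpa [zero_pow (by omega : q ≠ 0)] using h
  set d : F := b ^ (q + 1) - (c ^ q + c) with hd
  have hdq : d ^ q = d := by
    rw [hd, frob_sub, frob_add, frob2]
    have hb : (b ^ (q + 1)) ^ q = b ^ (q + 1) := by
      rw [pow_succ, mul_pow, frob2, mul_comm, ← pow_succ]
    rw [hb]
    ring
  -- the key algebraic identity
  have key : ∀ x : F, ((-(b * x) - c) ^ q + (-(b * x) - c) = x ^ (q + 1)
      ↔ (x + b ^ q) ^ (q + 1) = d) := by
    intro x
    have hyq : (-(b * x) - c) ^ q = -(b ^ q * x ^ q) - c ^ q := by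
      have h1 : -(b * x) - c = -(b * x + c) := by ring
      rw [h1, frob_neg, frob_add, mul_pow]; ring
    have hxq : (x + b ^ q) ^ q = x ^ q + b := by
      rw [frob_add, frob2]
    have main : (x + b ^ q) ^ (q + 1) - d
        + ((-(b * x) - c) ^ q + (-(b * x) - c) - x ^ (q + 1)) = 0 := by
      rw [hyq, hd]
      simp only [pow_succ]
      rw [hxq]
      ring
    constructor <;> intro h <;> linear_combination main - h
  -- rewrite the solution set as an image
  have hSeq : {pt : F × F | pt.2 ^ q + pt.2 = pt.1 ^ (q + 1) ∧ pt.2 + b * pt.1 + c = 0}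
      = (fun z : F => (z - b ^ q, -(b * (z - b ^ q)) - c)) '' {z : F | z ^ (q + 1) = d} := by
    ext ⟨x, y⟩
    simp only [Set.mem_setOf_eq, Set.mem_image, Prod.mk.injEq]
    constructor
    · rintro ⟨hK, hL⟩
      have hy : y = -(b * x) - c := by linear_combination hL
      subst hy
      refine ⟨x + b ^ q, (key x).mp hK, by ring, by ring⟩
    · rintro ⟨z, hz, hx, hy⟩
      subst hx; subst hy
      constructor
      · exact (key (z - b ^ q)).mpr (by simpa using hz)
      · ring
  have hinj : Function.Injective (fun z : F => (z - b ^ q, -(b * (z - b ^ q)) - c)) := by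
    intro a₁ a₂ h
    have := congrArg Prod.fst h
    simpa using this
  rw [hSeq, Set.ncard_image_of_injective _ hinj]
  rcases eq_or_ne (c ^ q + c) (b ^ (q + 1))  with hcase | hcase
  · -- d = 0
    have hd0 : d = 0 := by rw [hd, hcase]; ring
    have : {z : F | z ^ (q + 1) = d} = {0} := by
      ext z
      simp [hd0, pow_eq_zero_iff (by omega : q + 1 ≠ 0)]
    rw [this]
    simp [hcase]
  · -- d ≠ 0
    have hd0 : d ≠ 0 := by
      rw [hd, sub_ne_zero]
      exact fun h => hcase (h.symm)
    have hcount := root_count hq2 hF hd0 hdq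
    rw [hcount]
    exact ⟨⟨fun h => absurd h (by omega), fun h => absurd h hcase⟩, fun _ => rfl⟩
end

section
/- Let a ∈ F satisfy a^q = a. Then the polynomial Y^q + Y − a ∈ F[Y] has exactly q distinct roots in F, and it factors over F as the product of (Y − d) over these q roots d. -/
open Polynomial

/-- Let `a ∈ F` satisfy `a^q = a`. Then the polynomial `Y^q + Y − a ∈ F[Y]` has exactly `q`
distinct roots in `F`, and it factors over `F` as the product of `(Y − d)` over these roots. -/
theorem stmt_8 (q : ℕ) (hq : IsPrimePow q) (F : Type*) [Field F] [Fintype F] [DecidableEq F]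
    (hF : Fintype.card F = q ^ 2) (a : F) (ha : a ^ q = a) :
    (X ^ q + X - C a : F[X]).roots.toFinset.card = q ∧
      (X ^ q + X - C a : F[X])
        = ∏ d ∈ (X ^ q + X - C a : F[X]).roots.toFinset, (X - C d) := by
  obtain ⟨p, k, hp, hk, hpk⟩ := hq
  have hp' : p.Prime := hp.nat_prime
  haveI : Fact p.Prime := ⟨hp'⟩
  have h2q : 2 ≤ q := by
    rw [← hpk]
    calc 2 ≤ p := hp'.two_le
    _ = p ^ 1 := (pow_one p).symm
    _ ≤ p ^ k := Nat.pow_le_pow_right hp'.pos hk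
  -- characteristic
  have hchar : CharP F p := by
    have h0 := ringChar.charP F
    obtain ⟨n, hc, hcard⟩ := FiniteField.card F (ringChar F)
    have hpq : (ringChar F) ∣ (p ^ k) ^ 2 := by
      rw [hpk, ← hF, hcard]
      exact dvd_pow_self _ n.pos.ne'
    have : ringChar F = p :=
      (Nat.prime_dvd_prime_iff_eq hc hp').mp
        (hc.dvd_of_dvd_pow (hc.dvd_of_dvd_pow hpq))
    exact this ▸ h0
  haveI := hchar
  set P : F[X] := X ^ q + X - C a with hP
  have hqF : (q : F[X]) = 0 := by
    rw [← hpk, Nat.cast_pow, CharP.cast_eq_zero F[X] p, zero_pow hk.ne']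
  have hmonic : P.Monic := by
    have : (X - C a : F[X]).degree < q := by
      calc (X - C a : F[X]).degree ≤ 1 := degree_X_sub_C_le a
      _ < (q : WithBot ℕ) := by exact_mod_cast (by omega : 1 < q)
    simpa [hP, add_sub_assoc] using monic_X_pow_add this
  have hdeg : P.natDegree = q := by
    rw [hP, add_sub_assoc]
    rw [natDegree_add_eq_left_of_natDegree_lt, natDegree_X_pow]
    rw [natDegree_X_pow]
    calc (X - C a : F[X]).natDegree ≤ 1 := natDegree_X_sub_C_le a
    _ < q := by omega
  have hPne : P ≠ 0 := hmonic.ne_zero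
  -- key divisibility
  have hkey : P ^ q - P = X ^ q ^ 2 - X := by
    have : P ^ q = X ^ q ^ 2 + X ^ q - C a := by
      rw [hP, ← hpk, sub_pow_char_pow, add_pow_char_pow, ← pow_mul, ← C_pow, hpk, ha, ← sq]
    rw [this, hP]
    ring
  have hdvd : P ∣ (X ^ q ^ 2 - X : F[X]) := by
    refine ⟨P ^ (q - 1) - 1, ?_⟩
    rw [← hkey, mul_sub, mul_one, ← pow_succ']
    congr 2
    omega
  -- the big polynomial splits with all elements as roots
  have hbigne : (X ^ q ^ 2 - X : F[X]) ≠ 0 := by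
    rw [← hF]
    exact FiniteField.X_pow_card_sub_X_ne_zero F Fintype.one_lt_card
  have hbigsplits : Splits (X ^ q ^ 2 - X : F[X]) := by
    rw [splits_iff_card_roots, ← hF, FiniteField.roots_X_pow_card_sub_X,
      FiniteField.X_pow_card_sub_X_natDegree_eq F Fintype.one_lt_card]
    rfl
  have hsplits : Splits P := hbigsplits.of_dvd hbigne hdvd
  -- separability
  have hder : P.derivative = 1 := by
    rw [hP]
    simp [derivative_X_pow, hqF]
  have hsep : P.Separable := by
    rw [separable_def, hder]
    exact isCoprime_one_right
  have hnodup : P.roots.Nodup := nodup_roots hsep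
  have hcard : P.roots.card = q := by
    rw [splits_iff_card_roots.mp hsplits, hdeg]
  constructor
  · rw [Multiset.toFinset_card_eq_card_iff_nodup.mpr hnodup, hcard]
  · rw [Finset.prod_eq_multiset_prod, Multiset.toFinset_val,
      Multiset.dedup_eq_self.mpr hnodup]
    simpa using hsplits.eq_prod_roots_of_monic hmonic
end

section
/- Let (a, b) ∈ K and let m ∈ F with m ≠ a^q. Then the set of points of K on the line through (a, b) with slope m, namely {(x, y) ∈ K : y = b + m·(x − a)}, has exactly q + 1 elements. Moreover, if m₁, m₂ ∈ F are distinct with m₁ ≠ a^q and m₂ ≠ a^q, then the intersection of the two corresponding point sets of K is exactly {(a, b)}. -/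
/-- Let `(a, b) ∈ K` and `m ∈ F` with `m ≠ a^q`. Then the set of points of `K` on the line
through `(a, b)` with slope `m` has exactly `q + 1` elements. Moreover, if `m₁ ≠ m₂` are both
different from `a^q`, then the corresponding two point sets of `K` intersect exactly in
`{(a, b)}`. -/
theorem stmt_11 (q : ℕ) (hq : IsPrimePow q) (F : Type*) [Field F] [Fintype F]
    (hF : Fintype.card F = q ^ 2) (a b : F) (hab : b ^ q + b = a ^ (q + 1)) :
    (∀ m : F, m ≠ a ^ q →
        {p : F × F | p.2 ^ q + p.2 = p.1 ^ (q + 1) ∧ p.2 = b + m * (p.1 - a)}.ncard = q + 1) ∧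
      (∀ m₁ m₂ : F, m₁ ≠ m₂ → m₁ ≠ a ^ q → m₂ ≠ a ^ q →
        {p : F × F | p.2 ^ q + p.2 = p.1 ^ (q + 1) ∧ p.2 = b + m₁ * (p.1 - a)}
            ∩ {p : F × F | p.2 ^ q + p.2 = p.1 ^ (q + 1) ∧ p.2 = b + m₂ * (p.1 - a)}
          = {(a, b)}) := by
  classical
  obtain ⟨r, k, hr, hk, hrk⟩ := hq
  have hr' : Nat.Prime r := hr.nat_prime
  have hq2 : 2 ≤ q := by
    calc 2 ≤ r := hr'.two_le
    _ ≤ r ^ k := Nat.le_self_pow (by omega) r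
    _ = q := hrk
  -- the characteristic of F is r
  haveI : CharP F (ringChar F) := ringChar.charP F
  have hrc : Nat.Prime (ringChar F) := CharP.char_is_prime F (ringChar F)
  obtain ⟨n, -, hn⟩ := FiniteField.card F (ringChar F)
  have hreq : ringChar F = r := by
    have hdvd : ringChar F ∣ r ^ (k * 2) := by
      have : (ringChar F) ^ (n : ℕ) = r ^ (k * 2) := by
        rw [← hn, hF, ← hrk, ← pow_mul]
      exact this ▸ dvd_pow_self (ringChar F) (by positivity)
    exact (Nat.prime_dvd_prime_iff_eq hrc hr').mp (hrc.dvd_of_dvd_pow hdvd)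
  haveI : CharP F r := hreq ▸ ringChar.charP F
  haveI : ExpChar F r := ExpChar.prime hr'
  have hfrob : ∀ x y : F, (x + y) ^ q = x ^ q + y ^ q := by
    intro x y; rw [← hrk]; exact add_pow_expChar_pow x y r k
  have hsub : ∀ x y : F, (x - y) ^ q = x ^ q - y ^ q := by
    intro x y; rw [← hrk]; exact sub_pow_expChar_pow x y k
  have hqq : ∀ x : F, (x ^ q) ^ q = x := by
    intro x
    rw [← pow_mul, ← sq, ← hF, FiniteField.pow_card]
  -- the (q+1)-st roots of unity
  have hsq : q ^ 2 - 1 = (q + 1) * (q - 1) := by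
    obtain ⟨s, rfl⟩ : ∃ s, q = s + 2 := ⟨q - 2, by omega⟩
    have h2 : (s + 2) ^ 2 = s * s + 4 * s + 4 := by ring
    have h3 : (s + 2 + 1) * (s + 2 - 1) = s * s + 4 * s + 3 := by
      rw [show s + 2 - 1 = s + 1 from by omega]; ring
    omega
  obtain ⟨g, hg⟩ := IsCyclic.exists_ofOrder_eq_natCard (α := Fˣ)
  have hgo : orderOf g = q ^ 2 - 1 := by
    rw [hg, Nat.card_eq_fintype_card, Fintype.card_units, hF]
  have hord : orderOf (g ^ (q - 1)) = q + 1 := by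
    rw [orderOf_pow' g (by omega), hgo, hsq]
    have : Nat.gcd ((q + 1) * (q - 1)) (q - 1) = q - 1 :=
      Nat.gcd_eq_right ⟨q + 1, (mul_comm _ _)⟩
    rw [this, Nat.mul_div_cancel _ (by omega)]
  have hprim : IsPrimitiveRoot ((g ^ (q - 1) : Fˣ) : F) (q + 1) := by
    have h1 : IsPrimitiveRoot (g ^ (q - 1)) (q + 1) := hord ▸ IsPrimitiveRoot.orderOf _
    exact IsPrimitiveRoot.coe_units_iff.mpr h1
  have hroots : ({z : F | z ^ (q + 1) = 1}).ncard = q + 1 := by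
    have hset : {z : F | z ^ (q + 1) = 1} = ↑(Polynomial.nthRootsFinset (q + 1) (1 : F)) := by
      ext z
      simp [Polynomial.mem_nthRootsFinset (show 0 < q + 1 by omega)]
    rw [hset, Set.ncard_coe_finset, hprim.card_nthRootsFinset]
  constructor
  · intro m hm
    have hc0 : a - m ^ q ≠ 0 := by
      intro h
      apply hm
      rw [sub_eq_zero] at h
      rw [h, hqq m]
    have hcq : (a - m ^ q) ^ q = a ^ q - m := by rw [hsub, hqq]
    -- the key algebraic identity
    have heq : ∀ x : F,
        ((b + m * (x - a)) ^ q + (b + m * (x - a)) = x ^ (q + 1)) ↔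
          ((x - a + (a - m ^ q)) ^ (q + 1) = (a - m ^ q) ^ (q + 1)) := by
      intro x
      have hid : (x - a + (a - m ^ q)) ^ (q + 1) - (a - m ^ q) ^ (q + 1) =
          x ^ (q + 1) - ((b + m * (x - a)) ^ q + (b + m * (x - a))) := by
        have e1 : (x - a + (a - m ^ q)) ^ (q + 1) =
            ((x - a) ^ q + (a ^ q - m)) * (x - a + (a - m ^ q)) := by
          rw [pow_succ, hfrob, hcq]
        have e2 : (a - m ^ q) ^ (q + 1) = (a ^ q - m) * (a - m ^ q) := by
          rw [pow_succ, hcq]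
        have e3 : x ^ (q + 1) = ((x - a) ^ q + a ^ q) * x := by
          rw [pow_succ, ← hfrob]
          ring_nf
        have e4 : (b + m * (x - a)) ^ q = b ^ q + m ^ q * (x - a) ^ q := by
          rw [hfrob, mul_pow]
        have hab' : b ^ q + b = a ^ q * a := by rw [hab, pow_succ]
        rw [e1, e2, e3, e4]
        linear_combination hab'
      constructor
      · intro h
        have : x ^ (q + 1) - ((b + m * (x - a)) ^ q + (b + m * (x - a))) = 0 := by
          rw [← h]; ring
        rw [← hid] at this
        exact sub_eq_zero.mp this
      · intro h
        have : (x - a + (a - m ^ q)) ^ (q + 1) - (a - m ^ q) ^ (q + 1) = 0 := by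
          rw [h]; ring
        rw [hid] at this
        have := sub_eq_zero.mp this
        exact this.symm
    -- rewrite the point set as an image
    have hS : {p : F × F | p.2 ^ q + p.2 = p.1 ^ (q + 1) ∧ p.2 = b + m * (p.1 - a)} =
        (fun u : F => (u - (a - m ^ q) + a, b + m * (u - (a - m ^ q)))) ''
          {u : F | u ^ (q + 1) = (a - m ^ q) ^ (q + 1)} := by
      ext p
      simp only [Set.mem_setOf_eq, Set.mem_image]
      constructor
      · rintro ⟨h1, h2⟩
        refine ⟨p.1 - a + (a - m ^ q), ?_, ?_⟩
        · rw [h2] at h1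
          exact (heq p.1).mp h1
        · have hx : p.1 - a + (a - m ^ q) - (a - m ^ q) + a = p.1 := by ring
          have hy : b + m * (p.1 - a + (a - m ^ q) - (a - m ^ q)) = p.2 := by
            rw [h2]; ring
          rw [hx, hy]
      · rintro ⟨u, hu, rfl⟩
        constructor
        · show (b + m * (u - (a - m ^ q))) ^ q + (b + m * (u - (a - m ^ q))) =
            (u - (a - m ^ q) + a) ^ (q + 1)
          have h2 : u - (a - m ^ q) + a - a + (a - m ^ q) = u := by ring
          have h4 := (heq (u - (a - m ^ q) + a)).mpr (by rw [h2]; exact hu)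
          have h3 : b + m * (u - (a - m ^ q) + a - a) = b + m * (u - (a - m ^ q)) := by ring
          rw [h3] at h4
          exact h4
        · show b + m * (u - (a - m ^ q)) = b + m * (u - (a - m ^ q) + a - a)
          ring
    rw [hS]
    rw [Set.ncard_image_of_injective _ (by
      intro u v huv
      have := congrArg Prod.fst huv
      simpa using this)]
    -- scale the roots of unity
    have hT : {u : F | u ^ (q + 1) = (a - m ^ q) ^ (q + 1)} =
        (fun z : F => (a - m ^ q) * z) '' {z : F | z ^ (q + 1) = 1} := by
      ext u
      simp only [Set.mem_setOf_eq, Set.mem_image]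
      constructor
      · intro h
        refine ⟨u / (a - m ^ q), ?_, ?_⟩
        · rw [div_pow, h, div_self (pow_ne_zero _ hc0)]
        · rw [mul_div_cancel₀ _ hc0]
      · rintro ⟨z, hz, rfl⟩
        rw [mul_pow, hz, mul_one]
    rw [hT, Set.ncard_image_of_injective _ (mul_right_injective₀ hc0), hroots]
  · intro m₁ m₂ hm hm1 hm2
    ext p
    simp only [Set.mem_inter_iff, Set.mem_setOf_eq, Set.mem_singleton_iff]
    constructor
    · rintro ⟨⟨h1, h2⟩, ⟨h3, h4⟩⟩
      have hx : p.1 = a := by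
        have h5 : (m₁ - m₂) * (p.1 - a) = 0 := by
          have := h2.symm.trans h4
          linear_combination this
        rcases mul_eq_zero.mp h5 with h | h
        · exact absurd (sub_eq_zero.mp h) hm
        · exact sub_eq_zero.mp h
      have hy : p.2 = b := by rw [h2, hx]; ring
      exact Prod.ext hx hy
    · rintro rfl
      refine ⟨⟨hab, by ring⟩, ⟨hab, by ring⟩⟩
end

section
/- There is an injective group homomorphism from Aut(G,S)* into Aut(L_G(S)) ∩ S_{n−1}; that is, Aut(G,S)* is isomorphic to a subgroup of Aut(L_G(S)) ∩ S_{n−1}. -/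
/-- Let `G` be a finite abelian group, `n ≥ 2`, and `g : Fin n → G` injective with `g 0 = 0`
(the list of elements of `S`). `Aut(G,S)*` is the group of permutations `σ` of the index set
fixing `0` that extend to automorphisms of `G`, and `Aut(L_G(S)) ∩ S_{n−1}` is the group of
permutations `σ` fixing `0` that map the lattice
`L_G(S) = {x ∈ ℤⁿ : ∑ xᵢ = 0 and ∑ xᵢ gᵢ = 0}` to itself. Then the former group is contained
in the latter (hence is isomorphic to a subgroup of it). -/
theorem stmt_12 (G : Type*) [AddCommGroup G] [Fintype G] (n : ℕ) [NeZero n] (hn : 2 ≤ n)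
    (g : Fin n → G) (hginj : Function.Injective g) (hg0 : g 0 = 0) :
    {σ : Equiv.Perm (Fin n) | σ 0 = 0 ∧ ∃ φ : G ≃+ G, ∀ i, φ (g i) = g (σ i)}
      ⊆ {σ : Equiv.Perm (Fin n) | σ 0 = 0 ∧ ∀ x : Fin n → ℤ,
          ((∑ i, x i = 0) ∧ (∑ i, x i • g i = 0)) →
            ((∑ i, x (σ i) = 0) ∧ (∑ i, x (σ i) • g i = 0))} := by
  rintro σ ⟨h0, φ, hφ⟩
  refine ⟨h0, fun x ⟨hx1, hx2⟩ => ⟨?_, ?_⟩⟩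
  · rw [Equiv.sum_comp σ x, hx1]
  · have hg : ∀ i, g i = φ.symm (g (σ i)) := fun i => by
      rw [← hφ i, φ.symm_apply_apply]
    calc ∑ i, x (σ i) • g i = ∑ i, x (σ i) • φ.symm (g (σ i)) := by
          simp_rw [← hg]
      _ = φ.symm (∑ i, x (σ i) • g (σ i)) := by
          rw [map_sum]; simp
      _ = φ.symm (∑ i, x i • g i) := by
          rw [Equiv.sum_comp σ (fun i => x i • g i)]
      _ = 0 := by rw [hx2, map_zero]
end

section
/- If S generates G (i.e., the subgroup of G generated by {g_0, g_1, …, g_{n−1}} is all of G), then the groups Aut(G,S)* and Aut(L_G(S)) ∩ S_{n−1} are isomorphic. -/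
/-- Let `G` be a finite abelian group, `n ≥ 2`, and `g : Fin n → G` injective with `g 0 = 0`
(the list of elements of `S`). If `S` generates `G`, then the group `Aut(G,S)*` of
permutations of the index set fixing `0` that extend to automorphisms of `G` coincides with
the group `Aut(L_G(S)) ∩ S_{n−1}` of permutations fixing `0` that map the lattice
`L_G(S) = {x ∈ ℤⁿ : ∑ xᵢ = 0 and ∑ xᵢ gᵢ = 0}` to itself; in particular the two groups are
isomorphic. -/
theorem stmt_13 (G : Type*) [AddCommGroup G] [Fintype G] (n : ℕ) [NeZero n] (hn : 2 ≤ n)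
    (g : Fin n → G) (hginj : Function.Injective g) (hg0 : g 0 = 0)
    (hgen : AddSubgroup.closure (Set.range g) = ⊤) :
    {σ : Equiv.Perm (Fin n) | σ 0 = 0 ∧ ∃ φ : G ≃+ G, ∀ i, φ (g i) = g (σ i)}
      = {σ : Equiv.Perm (Fin n) | σ 0 = 0 ∧ ∀ x : Fin n → ℤ,
          ((∑ i, x i = 0) ∧ (∑ i, x i • g i = 0)) →
            ((∑ i, x (σ i) = 0) ∧ (∑ i, x (σ i) • g i = 0))} := by
  ext σ
  simp only [Set.mem_setOf_eq]
  constructor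
  · rintro ⟨hσ0, φ, hφ⟩
    refine ⟨hσ0, fun x ⟨hx1, hx2⟩ => ⟨?_, ?_⟩⟩
    · rw [Equiv.sum_comp σ x]; exact hx1
    · have hsymm : ∀ i, g i = φ.symm (g (σ i)) := fun i => by
        rw [← hφ, AddEquiv.symm_apply_apply]
      calc ∑ i, x (σ i) • g i = ∑ i, x (σ i) • φ.symm (g (σ i)) := by
            exact Finset.sum_congr rfl fun i _ => by rw [← hsymm]
        _ = φ.symm (∑ i, x (σ i) • g (σ i)) := by
            rw [map_sum]
            exact Finset.sum_congr rfl fun i _ => (map_zsmul φ.symm _ _).symm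
        _ = φ.symm (∑ i, x i • g i) := by
            rw [Equiv.sum_comp σ (fun i => x i • g i)]
        _ = 0 := by rw [hx2, map_zero]
  · rintro ⟨hσ0, hσ⟩
    refine ⟨hσ0, ?_⟩
    -- the linear combination map
    set h : (Fin n → ℤ) →+ G :=
      { toFun := fun x => ∑ i, x i • g i
        map_zero' := by simp
        map_add' := fun x y => by
          simp [add_smul, Finset.sum_add_distrib] } with hh
    have hsingle : ∀ i, h (Pi.single i 1) = g i := by
      intro i
      simp only [hh, AddMonoidHom.coe_mk, ZeroHom.coe_mk]
      rw [Finset.sum_eq_single i]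
      · simp
      · intro b _ hb; simp [Pi.single_apply, hb]
      · simp
    have hsurj : Function.Surjective h := by
      rw [← AddMonoidHom.range_eq_top, eq_top_iff, ← hgen,
        AddSubgroup.closure_le]
      rintro _ ⟨i, rfl⟩
      exact ⟨Pi.single i 1, hsingle i⟩
    -- the permuted map
    set h₂ : (Fin n → ℤ) →+ G :=
      { toFun := fun x => ∑ i, x (σ i) • g i
        map_zero' := by simp
        map_add' := fun x y => by
          simp [add_smul, Finset.sum_add_distrib] } with hh₂
    have hσ0' : σ.symm 0 = 0 := by
      apply σ.injective; rw [Equiv.apply_symm_apply, hσ0]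
    have hsingle₂ : ∀ i, h₂ (Pi.single i 1) = g (σ.symm i) := by
      intro i
      simp only [hh₂, AddMonoidHom.coe_mk, ZeroHom.coe_mk]
      rw [Finset.sum_eq_single (σ.symm i)]
      · rw [Equiv.apply_symm_apply, Pi.single_eq_same, one_smul]
      · intro b _ hb
        have : σ b ≠ i := fun hc => hb (by rw [← hc, Equiv.symm_apply_apply])
        simp [Pi.single_apply, this]
      · simp
    have hker : ∀ x, h x = 0 → h₂ x = 0 := by
      intro x hx
      set s : ℤ := ∑ i, x i with hs
      set x' : Fin n → ℤ := x - s • Pi.single 0 1 with hx'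
      have hsum' : ∑ i, x' i = 0 := by
        simp only [hx', Pi.sub_apply, Pi.smul_apply, Finset.sum_sub_distrib]
        rw [← Finset.smul_sum]
        have h1 : ∑ i : Fin n, Pi.single (0 : Fin n) (1:ℤ) i = 1 := by
          rw [Finset.sum_eq_single (0 : Fin n)]
          · simp
          · intro b _ hb; simp [Pi.single_apply, hb]
          · simp
        rw [h1]; simp [hs]
      have hcomb' : ∑ i, x' i • g i = 0 := by
        have : h x' = 0 := by
          have : h x' = h x - s • h (Pi.single 0 1) := by
            rw [hx']; rw [map_sub, map_zsmul]
          rw [this, hx, hsingle 0, hg0, smul_zero, sub_zero]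
        exact this
      have := (hσ x' ⟨hsum', hcomb'⟩).2
      have hx'2 : h₂ x' = 0 := this
      have : h₂ x = h₂ x' + s • h₂ (Pi.single 0 1) := by
        rw [hx', map_sub, map_zsmul]; abel
      rw [this, hx'2, hsingle₂ 0, hσ0', hg0, smul_zero, add_zero]
    have hker' : h.ker ≤ h₂.ker := fun x hx => hker x hx
    let e := QuotientAddGroup.quotientKerEquivOfSurjective h hsurj
    let ψ : G →+ G := (QuotientAddGroup.lift h.ker h₂ hker').comp e.symm.toAddMonoidHom
    have hψ : ∀ x, ψ (h x) = h₂ x := by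
      intro x
      have he : e.symm (h x) = QuotientAddGroup.mk x := by
        rw [AddEquiv.symm_apply_eq]
        rfl
      show (QuotientAddGroup.lift h.ker h₂ hker') (e.symm (h x)) = h₂ x
      rw [he]
      rfl
    have hψsurj : Function.Surjective ψ := by
      intro y
      obtain ⟨c, hc⟩ := hsurj y
      refine ⟨h (fun i => c (σ.symm i)), ?_⟩
      rw [hψ]
      have : h₂ (fun i => c (σ.symm i)) = h c := by
        show ∑ i, c (σ.symm (σ i)) • g i = ∑ i, c i • g i
        simp
      rw [this, hc]
    have hψbij : Function.Bijective ψ :=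
      ⟨Finite.injective_iff_surjective.mpr hψsurj, hψsurj⟩
    have hψg : ∀ i, ψ (g i) = g (σ.symm i) := by
      intro i
      rw [← hsingle i, hψ, hsingle₂]
    refine ⟨(AddEquiv.ofBijective ψ hψbij).symm, fun i => ?_⟩
    have : (AddEquiv.ofBijective ψ hψbij) (g (σ i)) = g i := by
      show ψ (g (σ i)) = g i
      rw [hψg, Equiv.symm_apply_apply]
    rw [← this, AddEquiv.symm_apply_apply]
end

section
/- The minimum squared Euclidean norm of a nonzero vector of L is 6 (so the minimal distance of L is √6), and L has exactly 6 minimal vectors, namely (−2, 1, 0, 1), (0, −2, 1, 1), (1, 0, −2, 1) and their negatives. -/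
private lemma key1' : ∀ a ∈ Finset.Icc (-2:ℤ) 2, ∀ b ∈ Finset.Icc (-2:ℤ) 2,
    ∀ c ∈ Finset.Icc (-2:ℤ) 2, ∀ d ∈ Finset.Icc (-2:ℤ) 2,
    a + b + c + d = 0 → (7:ℤ) ∣ (a + 2*b + 4*c) → a^2 + b^2 + c^2 + d^2 ≤ 5 →
    a = 0 ∧ b = 0 ∧ c = 0 ∧ d = 0 := by decide

set_option synthInstance.maxSize 512 in
private lemma key2' : ∀ a ∈ Finset.Icc (-2:ℤ) 2, ∀ b ∈ Finset.Icc (-2:ℤ) 2,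
    ∀ c ∈ Finset.Icc (-2:ℤ) 2, ∀ d ∈ Finset.Icc (-2:ℤ) 2,
    a + b + c + d = 0 → (7:ℤ) ∣ (a + 2*b + 4*c) → a^2 + b^2 + c^2 + d^2 = 6 →
    (a = -2 ∧ b = 1 ∧ c = 0 ∧ d = 1) ∨ (a = 0 ∧ b = -2 ∧ c = 1 ∧ d = 1) ∨
    (a = 1 ∧ b = 0 ∧ c = -2 ∧ d = 1) ∨ (a = 2 ∧ b = -1 ∧ c = 0 ∧ d = -1) ∨
    (a = 0 ∧ b = 2 ∧ c = -1 ∧ d = -1) ∨ (a = -1 ∧ b = 0 ∧ c = 2 ∧ d = -1) := by decide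

private lemma bounded {a s : ℤ} (h : a ^ 2 ≤ s) (hs : s ≤ 6) : a ∈ Finset.Icc (-2:ℤ) 2 := by
  simp only [Finset.mem_Icc]
  constructor <;> nlinarith

/-- For the lattice `L = {x ∈ ℤ⁴ : x₁+x₂+x₃+x₄ = 0, x₁+2x₂+4x₃ ≡ 0 (mod 7)}`
(the lattice `L_{ℤ₇}(S)` for `S = {0,1,2,4} ⊆ ℤ/7ℤ`), the minimum squared Euclidean norm of a
nonzero vector is `6`, and `L` has exactly `6` minimal vectors, namely `(−2,1,0,1)`,
`(0,−2,1,1)`, `(1,0,−2,1)` and their negatives. -/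
theorem stmt_14 :
    (∀ x : Fin 4 → ℤ,
        ((∑ i, x i = 0) ∧ (7 : ℤ) ∣ (x 0 + 2 * x 1 + 4 * x 2)) → x ≠ 0 →
          6 ≤ ∑ i, (x i) ^ 2) ∧
      {x : Fin 4 → ℤ |
          ((∑ i, x i = 0) ∧ (7 : ℤ) ∣ (x 0 + 2 * x 1 + 4 * x 2)) ∧ x ≠ 0 ∧ ∑ i, (x i) ^ 2 = 6}
        = {![-2, 1, 0, 1], ![0, -2, 1, 1], ![1, 0, -2, 1],
            -![-2, 1, 0, 1], -![0, -2, 1, 1], -![1, 0, -2, 1]} ∧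
      {x : Fin 4 → ℤ |
          ((∑ i, x i = 0) ∧ (7 : ℤ) ∣ (x 0 + 2 * x 1 + 4 * x 2)) ∧ x ≠ 0 ∧ ∑ i, (x i) ^ 2 = 6}.ncard
        = 6 := by
  have part1 : ∀ x : Fin 4 → ℤ,
      ((∑ i, x i = 0) ∧ (7 : ℤ) ∣ (x 0 + 2 * x 1 + 4 * x 2)) → x ≠ 0 →
        6 ≤ ∑ i, (x i) ^ 2 := by
    intro x ⟨hsum, hdvd⟩ hne
    rw [Fin.sum_univ_four] at hsum ⊢
    by_contra hlt
    push_neg at hlt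
    have h5 : x 0 ^ 2 + x 1 ^ 2 + x 2 ^ 2 + x 3 ^ 2 ≤ 5 := by omega
    have h0 := sq_nonneg (x 0); have h1 := sq_nonneg (x 1)
    have h2 := sq_nonneg (x 2); have h3 := sq_nonneg (x 3)
    have hz := key1' (x 0) (bounded (show x 0 ^ 2 ≤ 5 by linarith) (by norm_num))
      (x 1) (bounded (show x 1 ^ 2 ≤ 5 by linarith) (by norm_num))
      (x 2) (bounded (show x 2 ^ 2 ≤ 5 by linarith) (by norm_num))
      (x 3) (bounded (show x 3 ^ 2 ≤ 5 by linarith) (by norm_num)) hsum hdvd h5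
    exact hne (funext fun i => by fin_cases i <;> simp [hz.1, hz.2.1, hz.2.2.1, hz.2.2.2])
  have part2 : {x : Fin 4 → ℤ |
          ((∑ i, x i = 0) ∧ (7 : ℤ) ∣ (x 0 + 2 * x 1 + 4 * x 2)) ∧ x ≠ 0 ∧ ∑ i, (x i) ^ 2 = 6}
        = {![-2, 1, 0, 1], ![0, -2, 1, 1], ![1, 0, -2, 1],
            -![-2, 1, 0, 1], -![0, -2, 1, 1], -![1, 0, -2, 1]} := by
    ext x
    simp only [Set.mem_setOf_eq, Set.mem_insert_iff, Set.mem_singleton_iff]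
    constructor
    · rintro ⟨⟨hsum, hdvd⟩, hne, hnorm⟩
      rw [Fin.sum_univ_four] at hsum hnorm
      have h0 := sq_nonneg (x 0); have h1 := sq_nonneg (x 1)
      have h2 := sq_nonneg (x 2); have h3 := sq_nonneg (x 3)
      have hc := key2' (x 0) (bounded (show x 0 ^ 2 ≤ 6 by linarith) le_rfl)
        (x 1) (bounded (show x 1 ^ 2 ≤ 6 by linarith) le_rfl)
        (x 2) (bounded (show x 2 ^ 2 ≤ 6 by linarith) le_rfl)
        (x 3) (bounded (show x 3 ^ 2 ≤ 6 by linarith) le_rfl) hsum hdvd hnorm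
      have hx : x = ![x 0, x 1, x 2, x 3] := funext fun i => by fin_cases i <;> rfl
      rcases hc with ⟨e0,e1,e2,e3⟩|⟨e0,e1,e2,e3⟩|⟨e0,e1,e2,e3⟩|⟨e0,e1,e2,e3⟩|⟨e0,e1,e2,e3⟩|⟨e0,e1,e2,e3⟩ <;>
        rw [hx, e0, e1, e2, e3]
      · exact Or.inl rfl
      · exact Or.inr (Or.inl rfl)
      · exact Or.inr (Or.inr (Or.inl rfl))
      · exact Or.inr (Or.inr (Or.inr (Or.inl (by decide))))
      · exact Or.inr (Or.inr (Or.inr (Or.inr (Or.inl (by decide)))))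
      · exact Or.inr (Or.inr (Or.inr (Or.inr (Or.inr (by decide)))))
    · rintro (rfl|rfl|rfl|rfl|rfl|rfl) <;> refine ⟨⟨by decide, by decide⟩, by decide, by decide⟩
  refine ⟨part1, part2, ?_⟩
  rw [part2]
  have : ({![-2, 1, 0, 1], ![0, -2, 1, 1], ![1, 0, -2, 1],
      -![-2, 1, 0, 1], -![0, -2, 1, 1], -![1, 0, -2, 1]} : Set (Fin 4 → ℤ))
      = (↑({![-2, 1, 0, 1], ![0, -2, 1, 1], ![1, 0, -2, 1],
      -![-2, 1, 0, 1], -![0, -2, 1, 1], -![1, 0, -2, 1]} : Finset (Fin 4 → ℤ)) : Set _) := by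
    simp
  rw [this, Set.ncard_coe_finset]
  decide
end

section
/- The three vectors (−2, 1, 0, 1), (0, −2, 1, 1), (1, 0, −2, 1) are minimal vectors of L and are linearly independent over ℚ; hence L, which has rank 3, is well-rounded. -/
lemma key15 : ∀ a b c d : ℤ, a+b+c+d=0 → (7:ℤ) ∣ (a+2*b+4*c) →
    ¬(a=0∧b=0∧c=0∧d=0) → 6 ≤ a^2+b^2+c^2+d^2 := by
  intro a b c d hs hd hne
  by_contra h
  push_neg at h
  have ha : a^2 ≤ 5 := by nlinarith [sq_nonneg b, sq_nonneg c, sq_nonneg d]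
  have hb : b^2 ≤ 5 := by nlinarith [sq_nonneg a, sq_nonneg c, sq_nonneg d]
  have hc : c^2 ≤ 5 := by nlinarith [sq_nonneg a, sq_nonneg b, sq_nonneg d]
  have hd' : d^2 ≤ 5 := by nlinarith [sq_nonneg a, sq_nonneg b, sq_nonneg c]
  have ha1 : -2 ≤ a ∧ a ≤ 2 := by constructor <;> nlinarith
  have hb1 : -2 ≤ b ∧ b ≤ 2 := by constructor <;> nlinarith
  have hc1 : -2 ≤ c ∧ c ≤ 2 := by constructor <;> nlinarith
  have hd1 : -2 ≤ d ∧ d ≤ 2 := by constructor <;> nlinarith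
  obtain ⟨ha2, ha3⟩ := ha1
  obtain ⟨hb2, hb3⟩ := hb1
  obtain ⟨hc2, hc3⟩ := hc1
  obtain ⟨hd2, hd3⟩ := hd1
  interval_cases a <;> interval_cases b <;> interval_cases c <;> interval_cases d <;> omega

lemma min15 (x : Fin 4 → ℤ) (h : (∑ i, x i = 0) ∧ (7 : ℤ) ∣ (x 0 + 2 * x 1 + 4 * x 2))
    (hx : x ≠ 0) : 6 ≤ ∑ i, (x i) ^ 2 := by
  have hne : ¬(x 0 = 0 ∧ x 1 = 0 ∧ x 2 = 0 ∧ x 3 = 0) := by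
    rintro ⟨h0, h1, h2, h3⟩
    apply hx
    funext i
    fin_cases i <;> assumption
  have := key15 (x 0) (x 1) (x 2) (x 3) (by simpa [Fin.sum_univ_four] using h.1) h.2 hne
  simpa [Fin.sum_univ_four] using this

lemma li15 : LinearIndependent ℚ (![![(-2 : ℚ), 1, 0, 1], ![0, -2, 1, 1], ![1, 0, -2, 1]]) := by
  rw [Fintype.linearIndependent_iff]
  intro g hg
  have h0 := congrFun hg 0
  have h1 := congrFun hg 1
  have h2 := congrFun hg 2
  simp [Fin.sum_univ_three] at h0 h1 h2
  intro i
  fin_cases i <;> simp <;> linarith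

/-- For the lattice `L = {x ∈ ℤ⁴ : x₁+x₂+x₃+x₄ = 0, x₁+2x₂+4x₃ ≡ 0 (mod 7)}`, the three
vectors `(−2,1,0,1)`, `(0,−2,1,1)`, `(1,0,−2,1)` are minimal vectors of `L` (nonzero vectors
of `L` of least Euclidean norm) and are linearly independent over `ℚ`; moreover `L` has
rank `3` (so `L` is well-rounded). -/
theorem stmt_15 :
    (∀ v ∈ ({![(-2 : ℤ), 1, 0, 1], ![0, -2, 1, 1], ![1, 0, -2, 1]} : Set (Fin 4 → ℤ)),
        ((∑ i, v i = 0) ∧ (7 : ℤ) ∣ (v 0 + 2 * v 1 + 4 * v 2)) ∧ v ≠ 0 ∧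
          ∀ x : Fin 4 → ℤ,
            ((∑ i, x i = 0) ∧ (7 : ℤ) ∣ (x 0 + 2 * x 1 + 4 * x 2)) → x ≠ 0 →
              ∑ i, (v i) ^ 2 ≤ ∑ i, (x i) ^ 2) ∧
      LinearIndependent ℚ (![![(-2 : ℚ), 1, 0, 1], ![0, -2, 1, 1], ![1, 0, -2, 1]]) ∧
      Module.finrank ℚ (Submodule.span ℚ ((fun x : Fin 4 → ℤ => fun i => (x i : ℚ)) ''
          {x : Fin 4 → ℤ | (∑ i, x i = 0) ∧ (7 : ℤ) ∣ (x 0 + 2 * x 1 + 4 * x 2)})) = 3 := by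
  refine ⟨?_, ?_, ?_⟩
  · intro v hv
    have hv' : v = ![(-2 : ℤ), 1, 0, 1] ∨ v = ![0, -2, 1, 1] ∨ v = ![1, 0, -2, 1] := hv
    rcases hv' with rfl | rfl | rfl <;>
      refine ⟨⟨by decide, by decide⟩, ?_, fun x hx hx0 => ?_⟩ <;>
      first
        | decide
        | (have := min15 x hx hx0; simp [Fin.sum_univ_four] at this ⊢; omega)
  · exact li15
  · set f : (Fin 4 → ℚ) →ₗ[ℚ] ℚ :=
      { toFun := fun x => ∑ i, x i
        map_add' := by intro x y; simp [Finset.sum_add_distrib]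
        map_smul' := by intro c x; simp [Finset.mul_sum] }
    set W := Submodule.span ℚ ((fun x : Fin 4 → ℤ => fun i => (x i : ℚ)) ''
      {x : Fin 4 → ℤ | (∑ i, x i = 0) ∧ (7 : ℤ) ∣ (x 0 + 2 * x 1 + 4 * x 2)}) with hW
    have hupper : W ≤ LinearMap.ker f := by
      rw [Submodule.span_le]
      rintro y ⟨x, ⟨hx1, _⟩, rfl⟩
      simp only [SetLike.mem_coe, LinearMap.mem_ker]
      show (∑ i, ((x i : ℚ))) = 0
      have : ((∑ i, x i : ℤ) : ℚ) = 0 := by rw [hx1]; norm_num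
      push_cast at this
      exact this
    have hfsurj : LinearMap.range f = ⊤ := by
      rw [LinearMap.range_eq_top]
      intro c
      exact ⟨fun _ => c / 4, by simp [f, Fin.sum_univ_four]; ring⟩
    have hker : Module.finrank ℚ (LinearMap.ker f) = 3 := by
      have := LinearMap.finrank_range_add_finrank_ker f
      rw [hfsurj] at this
      simp [Module.finrank_self] at this
      omega
    have hle : Module.finrank ℚ W ≤ 3 := by
      rw [← hker]
      exact Submodule.finrank_mono hupper
    have hlower : Submodule.span ℚ
        (Set.range ![![(-2 : ℚ), 1, 0, 1], ![0, -2, 1, 1], ![1, 0, -2, 1]]) ≤ W := by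
      rw [Submodule.span_le]
      rintro y ⟨i, rfl⟩
      apply Submodule.subset_span
      fin_cases i
      · exact ⟨![(-2 : ℤ), 1, 0, 1], ⟨by decide, by decide⟩, by funext j; fin_cases j <;> norm_num⟩
      · exact ⟨![0, -2, 1, 1], ⟨by decide, by decide⟩, by funext j; fin_cases j <;> norm_num⟩
      · exact ⟨![1, 0, -2, 1], ⟨by decide, by decide⟩, by funext j; fin_cases j <;> norm_num⟩
    have hcard : Module.finrank ℚ (Submodule.span ℚ
        (Set.range ![![(-2 : ℚ), 1, 0, 1], ![0, -2, 1, 1], ![1, 0, -2, 1]])) = 3 := by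
      rw [finrank_span_eq_card li15]
      simp
    have hge : 3 ≤ Module.finrank ℚ W := by
      rw [← hcard]
      exact Submodule.finrank_mono hlower
    omega
end
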